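/- Pointwise IMS localization formula: let d ≥ 1, let ψ : ℝ^d → ℂ and χ : ℝ^d → ℝ be differentiable at a point x ∈ ℝ^d. Then Re⟨∇ψ(x), ∇(χ²ψ)(x)⟩ = ‖∇(χψ)(x)‖² − |ψ(x)|²·‖∇χ(x)‖², where ⟨u, v⟩ = Σ_{j=1}^d conj(u_j)v_j is the inner product of ℂ^d, ∇ denotes the gradient, and the gradient of a ℂ-valued function is taken componentwise on real and imaginary parts. -/

import Mathlib

open Complex

noncomputable section

/-- Pointwise IMS localization formula:
`Re⟨∇ψ(x), ∇(χ²ψ)(x)⟩ = ‖∇(χψ)(x)‖² − |ψ(x)|²‖∇χ(x)‖²`, where the gradient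
components are the directional derivatives along the standard basis vectors. -/
theorem ims_localization (d : ℕ) (hd : 1 ≤ d)
    (ψ : (Fin d → ℝ) → ℂ) (χ : (Fin d → ℝ) → ℝ) (x : Fin d → ℝ)
    (hψ : DifferentiableAt ℝ ψ x) (hχ : DifferentiableAt ℝ χ x) :
    (∑ j, (starRingEnd ℂ) (fderiv ℝ ψ x (Pi.single j 1)) *
        fderiv ℝ (fun y => ((χ y : ℂ) ^ 2) * ψ y) x (Pi.single j 1)).re =
      ∑ j, Complex.normSq (fderiv ℝ (fun y => (χ y : ℂ) * ψ y) x (Pi.single j 1)) -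
        Complex.normSq (ψ x) * ∑ j, (fderiv ℝ χ x (Pi.single j 1)) ^ 2 := by
  have hχc : DifferentiableAt ℝ (fun y => (χ y : ℂ)) x :=
    Complex.ofRealCLM.differentiableAt.comp x hχ
  have hfχ : fderiv ℝ (fun y => (χ y : ℂ)) x =
      Complex.ofRealCLM.comp (fderiv ℝ χ x) :=
    (Complex.ofRealCLM.hasFDerivAt.comp x hχ.hasFDerivAt).fderiv
  have h1 : fderiv ℝ (fun y => (χ y : ℂ) * ψ y) x =
      (χ x : ℂ) • fderiv ℝ ψ x + ψ x • fderiv ℝ (fun y => (χ y : ℂ)) x :=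
    fderiv_mul hχc hψ
  have h3 : fderiv ℝ (fun y => (χ y : ℂ) ^ 2) x =
      (2 * (χ x : ℂ)) • fderiv ℝ (fun y => (χ y : ℂ)) x := by
    have h : (fun y => (χ y : ℂ) ^ 2) = fun y => (χ y : ℂ) * (χ y : ℂ) := by
      ext y; ring
    rw [h, fderiv_fun_mul hχc hχc]
    ext v
    simp [two_mul, add_smul, smul_eq_mul, add_mul]
  have h2 : fderiv ℝ (fun y => ((χ y : ℂ) ^ 2) * ψ y) x =
      ((χ x : ℂ) ^ 2) • fderiv ℝ ψ x +
        ψ x • fderiv ℝ (fun y => (χ y : ℂ) ^ 2) x :=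
    fderiv_fun_mul (hχc.pow 2) hψ
  rw [Finset.mul_sum, ← Finset.sum_sub_distrib, Complex.re_sum]
  refine Finset.sum_congr rfl fun j _ => ?_
  rw [h2, h3, h1, hfχ]
  set a : ℂ := fderiv ℝ ψ x (Pi.single j 1)
  set b : ℝ := fderiv ℝ χ x (Pi.single j 1)
  simp only [ContinuousLinearMap.add_apply, ContinuousLinearMap.smul_apply,
    ContinuousLinearMap.coe_comp', Function.comp_apply, Complex.ofRealCLM_apply,
    smul_eq_mul]
  simp [Complex.normSq_apply, Complex.mul_re, Complex.mul_im, Complex.add_re,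
    Complex.add_im, ← Complex.ofReal_pow]
  ring
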